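/- The boundary Z ∖ 𝔥 equals the union, over all good root subsystems Φ′ of Φ, of the sets C(Φ′) := {x ∈ Z : x_λ = ∞ for every λ ∈ Φ⁺ ∖ Φ′}. -/

import Mathlib

open scoped Classical
noncomputable section

/-- A reduced crystallographic root system spanning `E`. -/
def IsRootSystem {E : Type*} [AddCommGroup E] [Module ℚ E] (Φ : Set E) : Prop :=
  Φ.Finite ∧ (0 : E) ∉ Φ ∧ Submodule.span ℚ Φ = ⊤ ∧ (∀ α ∈ Φ, -α ∈ Φ) ∧
    (∀ α ∈ Φ, ∃ f : E →ₗ[ℚ] ℚ, f α = 2 ∧ (∀ β ∈ Φ, ∃ n : ℤ, f β = (n : ℚ)) ∧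
      ∀ β ∈ Φ, β - f β • α ∈ Φ) ∧
    ∀ α ∈ Φ, ∀ c : ℚ, c • α ∈ Φ → c = 1 ∨ c = -1

/-- Canonical homogeneous coordinates on `ℙ¹ = ℂ ∪ {∞}`. -/
def coordP1 : OnePoint ℂ → ℂ × ℂ :=
  fun x => Option.elim x (0, 1) fun c => (1, c)

/-- Membership in `Z`. -/
def memZ {E : Type*} [AddCommGroup E] [Module ℚ E] (Φpos : Finset E)
    (x : Φpos → OnePoint ℂ) : Prop :=
  ∀ c : Φpos → ℚ, ∑ l : Φpos, c l • (l : E) = 0 →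
    ∑ l ∈ Finset.univ.filter fun l : Φpos => c l ≠ 0,
      (c l : ℂ) * (coordP1 (x l)).2 *
        ∏ m ∈ (Finset.univ.filter fun m : Φpos => c m ≠ 0).erase l, (coordP1 (x m)).1 = 0

/-- The embedding of the Cartan subalgebra `Hom_ℚ(E, ℂ)` into `(ℙ¹)^{Φ⁺}`. -/
def embH {E : Type*} [AddCommGroup E] [Module ℚ E] (Φpos : Finset E)
    (f : E →ₗ[ℚ] ℂ) : Φpos → OnePoint ℂ :=
  fun l => ((f (l : E) : ℂ) : OnePoint ℂ)

/-- `Ψ` is a closed root subsystem of `Θ`. -/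
def IsClosedSub {E : Type*} [AddCommGroup E] (Θ Ψ : Set E) : Prop :=
  Ψ ⊆ Θ ∧ (∀ l ∈ Ψ, -l ∈ Ψ) ∧ ∀ l ∈ Ψ, ∀ m ∈ Ψ, l + m ∈ Θ → l + m ∈ Ψ

/-- The rank of a subset: the dimension of its `ℚ`-linear span. -/
def rankOf {E : Type*} [AddCommGroup E] [Module ℚ E] (Ψ : Set E) : ℕ :=
  Module.finrank ℚ (Submodule.span ℚ Ψ)

/-- `Ψ` is a maximal closed root subsystem of `Θ` of rank `m`. -/
def IsMaxClosedOfRank {E : Type*} [AddCommGroup E] [Module ℚ E] (Θ Ψ : Set E) (m : ℕ) : Prop :=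
  IsClosedSub Θ Ψ ∧ rankOf Ψ = m ∧
    ∀ Ψ' : Set E, IsClosedSub Θ Ψ' → rankOf Ψ' = m → Ψ ⊆ Ψ' → Ψ' = Ψ

lemma coordP1_infty' : coordP1 (OnePoint.infty) = (0,1) := rfl

lemma coordP1_fst_of_ne {y : OnePoint ℂ} (h : y ≠ OnePoint.infty) : (coordP1 y).1 = 1 := by
  obtain ⟨z, rfl⟩ := OnePoint.ne_infty_iff_exists.mp h
  rfl

lemma memZ_mem_span {E : Type*} [AddCommGroup E] [Module ℚ E]
    {Φpos : Finset E} {x : Φpos → OnePoint ℂ} (hx : memZ Φpos x)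
    {a : Φpos} (ha : (a : E) ∈ Submodule.span ℚ
      (Subtype.val '' {l : Φpos | x l ≠ OnePoint.infty})) :
    x a ≠ OnePoint.infty := by
  intro hinf
  rw [Finsupp.mem_span_image_iff_linearCombination] at ha
  obtain ⟨c, hsupp, hc⟩ := ha
  have hca : c a = 0 := by
    by_contra h
    have : a ∈ {l : Φpos | x l ≠ OnePoint.infty} := hsupp (Finsupp.mem_support_iff.mpr h)
    exact this hinf
  set c' : Φpos → ℚ := fun l => c l - if l = a then 1 else 0 with hc'def
  have hsum : ∑ l : Φpos, c l • (l : E) = a := by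
    rw [← hc, Finsupp.linearCombination_apply, Finsupp.sum_fintype]
    intro l; exact zero_smul _ _
  have hrel : ∑ l : Φpos, c' l • (l : E) = 0 := by
    simp only [hc'def, sub_smul, ite_smul, one_smul, zero_smul, Finset.sum_sub_distrib,
      hsum, Finset.sum_ite_eq', Finset.mem_univ, if_true, sub_self]
  have hZ := hx c' hrel
  have hc'a : c' a = -1 := by simp [hc'def, hca]
  have haF : a ∈ Finset.univ.filter fun l : Φpos => c' l ≠ 0 := by
    simp [hc'a]
  rw [Finset.sum_eq_single_of_mem a haF ?h0] at hZ
  · have hmem : ∀ m ∈ (Finset.univ.filter fun m : Φpos => c' m ≠ 0).erase a,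
        (coordP1 (x m)).1 = 1 := by
      intro m hm
      obtain ⟨hma, hmF⟩ := Finset.mem_erase.mp hm
      have hcm : c m ≠ 0 := by
        have := (Finset.mem_filter.mp hmF).2
        simpa [hc'def, hma] using this
      have : m ∈ {l : Φpos | x l ≠ OnePoint.infty} := hsupp (Finsupp.mem_support_iff.mpr hcm)
      exact coordP1_fst_of_ne this
    rw [Finset.prod_congr rfl hmem, Finset.prod_const_one, hc'a, hinf, coordP1_infty'] at hZ
    norm_num at hZ
  · intro b hbF hba
    have : a ∈ (Finset.univ.filter fun m : Φpos => c' m ≠ 0).erase b :=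
      Finset.mem_erase.mpr ⟨hba.symm, haF⟩
    rw [Finset.prod_eq_zero this (by rw [hinf]; rfl), mul_zero]

lemma memZ_linear {E : Type*} [AddCommGroup E] [Module ℚ E]
    {Φpos : Finset E} {x : Φpos → OnePoint ℂ} (hx : memZ Φpos x)
    (hfin : ∀ l, x l ≠ OnePoint.infty) (c : Φpos → ℚ)
    (hc : ∑ l : Φpos, c l • (l : E) = 0) :
    ∑ l : Φpos, (c l : ℂ) * (coordP1 (x l)).2 = 0 := by
  have hZ := hx c hc
  have hone : ∀ l : Φpos, (coordP1 (x l)).1 = 1 := fun l => coordP1_fst_of_ne (hfin l)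
  rw [← Finset.sum_filter_of_ne (p := fun l : Φpos => c l ≠ 0)
    (fun l _ h => by intro h0; apply h; rw [h0]; simp)]
  simpa [hone] using hZ

lemma extend_by_roots {E : Type*} [AddCommGroup E] [Module ℚ E] [FiniteDimensional ℚ E]
    (Φ : Set E) (h0 : (0:E) ∉ Φ) (hspan : Submodule.span ℚ Φ = ⊤) :
    ∀ (n : ℕ) (W : Submodule ℚ E), (∃ T : Set E, T ⊆ Φ ∧ Submodule.span ℚ T = W) →
      Module.finrank ℚ W + n + 1 = Module.finrank ℚ E →
      ∃ W' : Submodule ℚ E, W ≤ W' ∧ (∃ T : Set E, T ⊆ Φ ∧ Submodule.span ℚ T = W')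
        ∧ Module.finrank ℚ W' + 1 = Module.finrank ℚ E := by
  intro n
  induction n with
  | zero => exact fun W hT h => ⟨W, le_refl _, hT, by simpa using h⟩
  | succ n ih =>
    rintro W ⟨T, hTΦ, hTW⟩ h
    have hW_ne : ¬ Φ ⊆ (W : Set E) := by
      intro hsub
      have htop : W = ⊤ := top_le_iff.mp (hspan ▸ Submodule.span_le.mpr hsub)
      rw [htop, finrank_top] at h
      omega
    obtain ⟨β, hβΦ, hβW⟩ := Set.not_subset.mp hW_ne
    have hβ0 : β ≠ 0 := fun hβ => h0 (hβ ▸ hβΦ)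
    set W' := W ⊔ Submodule.span ℚ {β} with hW'
    have hβW' : β ∈ W' :=
      (le_sup_right : Submodule.span ℚ {β} ≤ W') (Submodule.mem_span_singleton_self β)
    have hlt : W < W' := lt_of_le_of_ne le_sup_left (fun hEq => hβW (hEq ▸ hβW'))
    have h1 : Module.finrank ℚ W < Module.finrank ℚ W' :=
      Submodule.finrank_lt_finrank_of_lt hlt
    have h2 : Module.finrank ℚ W' ≤ Module.finrank ℚ W + 1 := by
      have := Submodule.finrank_add_le_finrank_add_finrank W (Submodule.span ℚ {β})
      rwa [finrank_span_singleton hβ0] at this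
    obtain ⟨W'', hle, hT'', hrk⟩ := ih W' ⟨T ∪ {β}, Set.union_subset hTΦ (by simpa using hβΦ),
      by rw [Submodule.span_union, hTW]⟩ (by omega)
    exact ⟨W'', le_trans hlt.le hle, hT'', hrk⟩

theorem statement2 {E : Type*} [AddCommGroup E] [Module ℚ E] [FiniteDimensional ℚ E]
    (hr : 1 ≤ Module.finrank ℚ E)
    (Φ : Set E) (hΦ : IsRootSystem Φ)
    (ℓ : E →ₗ[ℚ] ℚ) (hℓ : ∀ α ∈ Φ, ℓ α ≠ 0)
    (Φpos : Finset E) (hpos : ∀ a : E, a ∈ Φpos ↔ a ∈ Φ ∧ 0 < ℓ a) :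
    {x : Φpos → OnePoint ℂ | memZ Φpos x} \ Set.range (embH Φpos)
      = ⋃ Φ' ∈ {Ψ : Set E | IsMaxClosedOfRank Φ Ψ (Module.finrank ℚ E - 1)},
          {x : Φpos → OnePoint ℂ | memZ Φpos x ∧
            ∀ (l : E) (h : l ∈ Φpos), l ∉ Φ' → x ⟨l, h⟩ = OnePoint.infty} := by
  obtain ⟨-, h0, hspan, hneg, -, -⟩ := hΦ
  have hposΦ : ∀ a ∈ Φpos, a ∈ Φ := fun a ha => ((hpos a).mp ha).1
  have hspanpos : Submodule.span ℚ (Φpos : Set E) = ⊤ := by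
    rw [eq_top_iff, ← hspan, Submodule.span_le]
    intro a haΦ
    rcases lt_or_gt_of_ne (hℓ a haΦ) with hlt | hgt
    · have hm : -a ∈ Φpos := (hpos _).mpr ⟨hneg a haΦ, by rw [map_neg]; linarith⟩
      have h1 := Submodule.subset_span (R := ℚ) (s := (Φpos : Set E)) (Finset.mem_coe.mpr hm)
      have h2 := Submodule.neg_mem _ h1
      simpa using h2
    · exact Submodule.subset_span (Finset.mem_coe.mpr ((hpos a).mpr ⟨haΦ, hgt⟩))
  ext x
  simp only [Set.mem_diff, Set.mem_setOf_eq, Set.mem_range, Set.mem_iUnion, exists_prop]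
  constructor
  · rintro ⟨hxZ, hxh⟩
    by_cases hall : ∀ l : Φpos, x l ≠ OnePoint.infty
    · exfalso; apply hxh
      set v : Φpos → ℂ := fun l => (coordP1 (x l)).2 with hv
      have hxv : ∀ l : Φpos, x l = (v l : OnePoint ℂ) := by
        intro l
        obtain ⟨z, hz⟩ := OnePoint.ne_infty_iff_exists.mp (hall l)
        have hvz : v l = z := by rw [hv]; simp only [← hz]; rfl
        rw [hvz, ← hz]
      set T : (Φpos →₀ ℚ) →ₗ[ℚ] E := Finsupp.linearCombination ℚ (fun l : Φpos => (l : E))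
        with hT
      set g : (Φpos →₀ ℚ) →ₗ[ℚ] ℂ := Finsupp.linearCombination ℚ v with hg
      have hTsurj : LinearMap.range T = ⊤ := by
        have hrg : (Set.range fun l : {a // a ∈ Φpos} => (l : E)) = (Φpos : Set E) :=
          Subtype.range_coe
        rw [hT, Finsupp.range_linearCombination, hrg, hspanpos]
      obtain ⟨s, hs⟩ := T.exists_rightInverse_of_surjective hTsurj
      have hTd : ∀ d : Φpos →₀ ℚ, T d = ∑ l : Φpos, d l • (l : E) := by
        intro d
        rw [hT, Finsupp.linearCombination_apply]
        exact Finsupp.sum_fintype _ _ (fun l => zero_smul _ _)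
      have hgd : ∀ d : Φpos →₀ ℚ, g d = ∑ l : Φpos, (d l : ℂ) * v l := by
        intro d
        rw [hg, Finsupp.linearCombination_apply]
        have hsf := Finsupp.sum_fintype d (fun (i : {a // a ∈ Φpos}) (a : ℚ) => a • v i)
          (fun l => zero_smul ℚ (v l))
        rw [hsf]
        exact Finset.sum_congr rfl fun l _ => Rat.smul_def _ _
      have hker : ∀ d : Φpos →₀ ℚ, T d = 0 → g d = 0 := by
        intro d hd
        rw [hTd] at hd
        rw [hgd]
        exact memZ_linear hxZ hall (fun l => d l) hd
      refine ⟨g ∘ₗ s, funext fun l => ?_⟩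
      have hT1 : T (Finsupp.single l 1) = (l : E) := by
        rw [hT, Finsupp.linearCombination_single, one_smul]
      have hTs : T (s (l : E)) = (l : E) := by
        have := LinearMap.congr_fun hs (l : E); simpa using this
      have hd0 : T (s (l : E) - Finsupp.single l 1) = 0 := by
        rw [map_sub, hTs, hT1, sub_self]
      have h3 := hker _ hd0
      rw [map_sub, sub_eq_zero] at h3
      have h4 : g (Finsupp.single l 1) = v l := by
        rw [hg, Finsupp.linearCombination_single, one_smul]
      show ((g (s (l : E)) : ℂ) : OnePoint ℂ) = x l
      rw [h3, h4, hxv l]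
    · push_neg at hall
      obtain ⟨μ, hμ⟩ := hall
      set S : Set ↑Φpos := {l : Φpos | x l ≠ OnePoint.infty} with hS
      set V : Submodule ℚ E := Submodule.span ℚ (Subtype.val '' S) with hV
      have hμV : (μ : E) ∉ V := fun h => (memZ_mem_span hxZ h) hμ
      have hVlt : V < ⊤ := lt_top_iff_ne_top.mpr (fun h => hμV (h ▸ Submodule.mem_top))
      have hVrk : Module.finrank ℚ V < Module.finrank ℚ E := Submodule.finrank_lt hVlt.ne
      have hSΦ : Subtype.val '' S ⊆ Φ := by
        rintro e ⟨l, -, rfl⟩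
        exact hposΦ l l.2
      obtain ⟨W, hVW, ⟨T, hTΦ, hTW⟩, hWrk⟩ := extend_by_roots Φ h0 hspan
        (Module.finrank ℚ E - 1 - Module.finrank ℚ V) V
        ⟨Subtype.val '' S, hSΦ, rfl⟩ (by omega)
      have hspanW : Submodule.span ℚ (Φ ∩ (W : Set E)) = W := by
        refine le_antisymm (Submodule.span_le.mpr Set.inter_subset_right) ?_
        rw [← hTW]
        exact Submodule.span_mono (fun t ht => ⟨hTΦ ht, hTW ▸ Submodule.subset_span ht⟩)
      refine ⟨Φ ∩ (W : Set E), ⟨⟨Set.inter_subset_left,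
        fun l hl => ⟨hneg l hl.1, Submodule.neg_mem W hl.2⟩,
        fun l hl m hm hsum => ⟨hsum, Submodule.add_mem W hl.2 hm.2⟩⟩, ?_, ?_⟩, hxZ, ?_⟩
      · rw [rankOf, hspanW]; omega
      · intro Ψ' hclo' hrk' hsub'
        have hWΨ' : W ≤ Submodule.span ℚ Ψ' := hspanW ▸ Submodule.span_mono hsub'
        have hWeq : W = Submodule.span ℚ Ψ' := by
          refine Submodule.eq_of_le_of_finrank_le hWΨ' ?_
          rw [rankOf] at hrk'
          omega
        refine subset_antisymm (fun z hz => ⟨hclo'.1 hz, ?_⟩) hsub'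
        have : z ∈ Submodule.span ℚ Ψ' := Submodule.subset_span hz
        rw [← hWeq] at this
        exact this
      · intro l hl hlnot
        by_contra hne
        exact hlnot ⟨hposΦ l hl, hVW (Submodule.subset_span ⟨⟨l, hl⟩, hne, rfl⟩)⟩
  · rintro ⟨Φ', ⟨hclo', hrk', -⟩, hxZ, hinf⟩
    refine ⟨hxZ, ?_⟩
    rintro ⟨f, rfl⟩
    have hnsub : ¬ (Φpos : Set E) ⊆ Φ' := by
      intro hsub
      have h1 : Submodule.span ℚ Φ' = ⊤ :=
        eq_top_iff.mpr (hspanpos ▸ Submodule.span_mono hsub)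
      rw [rankOf, h1, finrank_top] at hrk'
      omega
    obtain ⟨a, ha, ha'⟩ := Set.not_subset.mp hnsub
    have ha2 : a ∈ Φpos := Finset.mem_coe.mp ha
    have := hinf a ha2 ha'
    exact OnePoint.coe_ne_infty _ this
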